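/- For all positive integers K and L and every real p with 0 ≤ p ≤ 1, the sum Σ_{α=1}^{K} [ C(K, min(α+L-1,K)) · C(min(α+L-1,K)-1, α-1) / C(K-α, min(α+L-1,K)-α) ] · p^{α-1} (1-p)^{K-α+1} equals T_C(K, L, p) = Σ_{α=1}^{K} C(K, α) p^{α-1} (1-p)^{K-α+1} · α / min(α+L-1, K). (Corollary 1: the coding delay achieved by the decentralized multi-transmitter delivery algorithm in the infinite file-size limit equals the stated closed form.) -/

import Mathlib

open Finset

/-- Coding delay of the decentralized multi-transmitter coded caching scheme
(infinite file-size limit): `K` users, `L` transmitters, caching ratio `p`. -/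
noncomputable def codingDelay (K L : ℕ) (p : ℝ) : ℝ :=
  ∑ α ∈ Finset.Icc 1 K,
    (K.choose α : ℝ) * p ^ (α - 1) * (1 - p) ^ (K - α + 1) *
      (α : ℝ) / (min (α + L - 1) K : ℝ)

theorem algorithm_delay_eq_closed_form (K L : ℕ) (hK : 0 < K) (hL : 0 < L)
    (p : ℝ) (hp0 : 0 ≤ p) (hp1 : p ≤ 1) :
    (∑ α ∈ Finset.Icc 1 K,
        ((K.choose (min (α + L - 1) K) : ℝ) *
            ((min (α + L - 1) K - 1).choose (α - 1) : ℝ) /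
            ((K - α).choose (min (α + L - 1) K - α) : ℝ)) *
          p ^ (α - 1) * (1 - p) ^ (K - α + 1))
      = codingDelay K L p := by
  unfold codingDelay
  refine Finset.sum_congr rfl fun α hα => ?_
  obtain ⟨hα1, hαK⟩ := Finset.mem_Icc.mp hα
  set m := min (α + L - 1) K with hm
  have hαm : α ≤ m := le_min (by omega) hαK
  have hmK : m ≤ K := min_le_right _ _
  have hm1 : 1 ≤ m := le_trans hα1 hαm
  -- key nat identity
  have key : K.choose m * (m - 1).choose (α - 1) * m = K.choose α * α * (K - α).choose (m - α) := by
    have h1 : m * (m - 1).choose (α - 1) = m.choose α * α := by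
      have := Nat.add_one_mul_choose_eq (m - 1) (α - 1)
      simp only [Nat.succ_eq_add_one, Nat.sub_add_cancel hm1, Nat.sub_add_cancel hα1] at this
      exact this
    have h2 : K.choose m * m.choose α = K.choose α * (K - α).choose (m - α) :=
      Nat.choose_mul hαm
    calc K.choose m * (m - 1).choose (α - 1) * m
        = K.choose m * (m * (m - 1).choose (α - 1)) := by ring
      _ = K.choose m * (m.choose α * α) := by rw [h1]
      _ = K.choose m * m.choose α * α := by ring
      _ = K.choose α * (K - α).choose (m - α) * α := by rw [h2]
      _ = K.choose α * α * (K - α).choose (m - α) := by ring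
  have hd : ((K - α).choose (m - α) : ℝ) ≠ 0 := by
    exact_mod_cast Nat.choose_pos (by omega : m - α ≤ K - α) |>.ne'
  have hm0 : (m : ℝ) ≠ 0 := by exact_mod_cast (by omega : m ≠ 0)
  have coef : (K.choose m : ℝ) * ((m - 1).choose (α - 1) : ℝ) / ((K - α).choose (m - α) : ℝ)
      = (K.choose α : ℝ) * α / m := by
    rw [div_eq_div_iff hd hm0]
    exact_mod_cast key
  calc ((K.choose m : ℝ) * ((m - 1).choose (α - 1) : ℝ) / ((K - α).choose (m - α) : ℝ))
        * p ^ (α - 1) * (1 - p) ^ (K - α + 1)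
      = ((K.choose m : ℝ) * ((m - 1).choose (α - 1) : ℝ) / ((K - α).choose (m - α) : ℝ))
        * (p ^ (α - 1) * (1 - p) ^ (K - α + 1)) := by ring
    _ = ((K.choose α : ℝ) * α / m) * (p ^ (α - 1) * (1 - p) ^ (K - α + 1)) := by rw [coef]
    _ = (K.choose α : ℝ) * p ^ (α - 1) * (1 - p) ^ (K - α + 1) * α / m := by ring
    _ = (K.choose α : ℝ) * p ^ (α - 1) * (1 - p) ^ (K - α + 1) * α /
        (((α : ℝ) + L - 1) ⊓ (K : ℝ)) := by
      rw [hm, Nat.cast_min, Nat.cast_sub (by omega), Nat.cast_add, Nat.cast_one]
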